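/- Let f_j be concave and L-smooth, u a direction with angle(∇f_j(x), u) ≤ π/2 − Δ and ‖u‖ ≤ G where G = ‖∇f_{i*}(x)‖. Then f_j(x + αu) ≥ f_j(x) + α‖u‖(sin Δ ‖∇f_j(x)‖ − (Lα/2) G); hence f_j(x + αu) ≥ f_j(x) whenever sin Δ ‖∇f_j(x)‖ ≥ (Lα/2) G. -/

import Mathlib

open Real RealInnerProductSpace InnerProductGeometry

lemma descent_lemma {n : ℕ} (f : EuclideanSpace ℝ (Fin n) → ℝ) (L : ℝ)
    (hdiff : Differentiable ℝ f)
    (hL : ∀ y z : EuclideanSpace ℝ (Fin n), ‖gradient f y - gradient f z‖ ≤ L * ‖y - z‖)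
    (x v : EuclideanSpace ℝ (Fin n)) :
    f (x + v) ≥ f x + ⟪gradient f x, v⟫ - L / 2 * ‖v‖ ^ 2 := by
  set g : ℝ → ℝ := fun t => ⟪gradient f (x + t • v), v⟫ with hg
  have hline : ∀ t : ℝ, HasDerivAt (fun s : ℝ => x + s • v) v t := fun t => by
    simpa using ((hasDerivAt_id t).smul_const v).const_add x
  have hφ : ∀ t : ℝ, HasDerivAt (fun s : ℝ => f (x + s • v)) (g t) t := by
    intro t
    have h2 := (hdiff (x + t • v)).hasGradientAt.hasFDerivAt
    have := h2.comp_hasDerivAt t (hline t)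
    exact this
  have hgradcont : Continuous fun y => gradient f y := by
    rw [Metric.continuous_iff]
    intro b ε hε
    by_cases hL0 : L ≤ 0
    · exact ⟨1, one_pos, fun a _ => by
        have := hL a b
        have : ‖gradient f a - gradient f b‖ ≤ 0 :=
          this.trans (mul_nonpos_of_nonpos_of_nonneg hL0 (norm_nonneg _))
        simpa [dist_eq_norm] using lt_of_le_of_lt this hε⟩
    · push_neg at hL0
      refine ⟨ε / L, by positivity, fun a ha => ?_⟩
      have h1 := hL a b
      rw [dist_eq_norm] at ha ⊢
      calc ‖gradient f a - gradient f b‖ ≤ L * ‖a - b‖ := h1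
        _ < L * (ε / L) := by exact mul_lt_mul_of_pos_left ha hL0
        _ = ε := by field_simp
  have hgcont : Continuous g := by
    apply Continuous.inner
    · exact hgradcont.comp (continuous_const.add (continuous_id.smul continuous_const))
    · exact continuous_const
  have hftc : ∫ t in (0:ℝ)..1, g t = f (x + v) - f x := by
    have := intervalIntegral.integral_eq_sub_of_hasDerivAt
      (f := fun s : ℝ => f (x + s • v)) (f' := g)
      (fun t _ => hφ t) (hgcont.intervalIntegrable 0 1)
    simpa using this
  have hlow : ∀ t ∈ Set.Icc (0:ℝ) 1, g 0 - L * ‖v‖ ^ 2 * t ≤ g t := by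
    intro t ht
    have h1 : g 0 - g t = ⟪gradient f (x + (0:ℝ) • v) - gradient f (x + t • v), v⟫ := by
      simp [g, inner_sub_left]
    have h2 : g 0 - g t ≤ ‖gradient f (x + (0:ℝ) • v) - gradient f (x + t • v)‖ * ‖v‖ :=
      h1 ▸ real_inner_le_norm _ _
    have h3 : ‖gradient f (x + (0:ℝ) • v) - gradient f (x + t • v)‖ ≤ L * (t * ‖v‖) := by
      have := hL (x + (0:ℝ) • v) (x + t • v)
      have he : x + (0:ℝ) • v - (x + t • v) = (-t) • v := by
        module
      rw [he, norm_smul] at this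
      simpa [abs_of_nonneg ht.1] using this
    nlinarith [norm_nonneg v, h2, h3, mul_le_mul_of_nonneg_right h3 (norm_nonneg v)]
  have hint : ∫ t in (0:ℝ)..1, (g 0 - L * ‖v‖ ^ 2 * t) ≤ ∫ t in (0:ℝ)..1, g t := by
    apply intervalIntegral.integral_mono_on (by norm_num)
    · exact ((continuous_const.sub (continuous_const.mul continuous_id)).intervalIntegrable 0 1)
    · exact hgcont.intervalIntegrable 0 1
    · exact hlow
  have hi : IntervalIntegrable (fun t : ℝ => L * ‖v‖ ^ 2 * t) MeasureTheory.volume 0 1 :=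
    Continuous.intervalIntegrable (by fun_prop) 0 1
  have hval : ∫ t in (0:ℝ)..1, (g 0 - L * ‖v‖ ^ 2 * t) = g 0 - L / 2 * ‖v‖ ^ 2 := by
    rw [intervalIntegral.integral_sub intervalIntegrable_const hi,
      intervalIntegral.integral_const_mul]
    simp [integral_id]
    ring
  rw [hval] at hint
  have hg0 : g 0 = ⟪gradient f x, v⟫ := by simp [g]
  rw [hg0] at hint
  linarith [hftc, hint]

/-- A step along a direction within the hypercone of `∇f_j(x)`, with norm bounded by `G`,
does not decrease `f_j` when `sin Δ ‖∇f_j(x)‖ ≥ (Lα/2) G`. -/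
theorem satisfied_objective_nondecrease {n : ℕ} (fj : EuclideanSpace ℝ (Fin n) → ℝ)
    (L Δ α G : ℝ) (x u : EuclideanSpace ℝ (Fin n))
    (hdiff : Differentiable ℝ fj)
    (hconc : ConcaveOn ℝ Set.univ fj)
    (hL : ∀ y z : EuclideanSpace ℝ (Fin n), ‖gradient fj y - gradient fj z‖ ≤ L * ‖y - z‖)
    (hLpos : 0 < L)
    (hΔ0 : 0 < Δ) (hΔ1 : Δ ≤ π / 2)
    (hangle : angle (gradient fj x) u ≤ π / 2 - Δ)
    (hG : ‖u‖ ≤ G) (hα : 0 ≤ α) :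
    fj (x + α • u) ≥ fj x + α * ‖u‖ * (Real.sin Δ * ‖gradient fj x‖ - L * α / 2 * G) ∧
    (Real.sin Δ * ‖gradient fj x‖ ≥ L * α / 2 * G → fj (x + α • u) ≥ fj x) := by
  have hdesc := descent_lemma fj L hdiff hL x (α • u)
  have hinner : ⟪gradient fj x, u⟫ ≥ Real.sin Δ * (‖gradient fj x‖ * ‖u‖) := by
    by_cases hg0 : gradient fj x = 0
    · simp [hg0]
    by_cases hu0 : u = 0
    · simp [hu0]
    have hng : ‖gradient fj x‖ ≠ 0 := norm_ne_zero_iff.2 hg0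
    have hnu : ‖u‖ ≠ 0 := norm_ne_zero_iff.2 hu0
    have hcos : Real.cos (π / 2 - Δ) ≤ Real.cos (angle (gradient fj x) u) := by
      apply Real.cos_le_cos_of_nonneg_of_le_pi (angle_nonneg _ _) _ hangle
      linarith [Real.pi_pos]
    rw [Real.cos_pi_div_two_sub] at hcos
    have heq : ⟪gradient fj x, u⟫ =
        Real.cos (angle (gradient fj x) u) * (‖gradient fj x‖ * ‖u‖) := by
      rw [InnerProductGeometry.cos_angle]
      field_simp
    rw [heq]
    have : 0 ≤ ‖gradient fj x‖ * ‖u‖ := by positivity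
    exact mul_le_mul_of_nonneg_right hcos this
  have hsmul : ⟪gradient fj x, α • u⟫ = α * ⟪gradient fj x, u⟫ := real_inner_smul_right _ _ _
  have hnorm : ‖α • u‖ ^ 2 = α ^ 2 * ‖u‖ ^ 2 := by
    rw [norm_smul]; simp [Real.norm_eq_abs, abs_of_nonneg hα]; ring
  rw [hsmul, hnorm] at hdesc
  have key : fj (x + α • u) ≥
      fj x + α * ‖u‖ * (Real.sin Δ * ‖gradient fj x‖ - L * α / 2 * G) := by
    have h1 : α * ⟪gradient fj x, u⟫ ≥ α * (Real.sin Δ * (‖gradient fj x‖ * ‖u‖)) :=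
      mul_le_mul_of_nonneg_left hinner hα
    nlinarith [norm_nonneg u, mul_le_mul_of_nonneg_left hG
      (mul_nonneg (mul_nonneg (by positivity : (0:ℝ) ≤ L / 2) (sq_nonneg α)) (norm_nonneg u))]
  refine ⟨key, fun hge => ?_⟩
  have : 0 ≤ α * ‖u‖ * (Real.sin Δ * ‖gradient fj x‖ - L * α / 2 * G) := by
    apply mul_nonneg (mul_nonneg hα (norm_nonneg u))
    linarith
  linarith
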